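/- Let q be a real number with 0 < q < 1. In the ring of formal power series over ℝ in one variable X, the q-exponential series e_q(X) = Σ_{n≥0} X^n/(n)_q! equals the exponential of the series S = Σ_{k≥1} ((1−q)^k/(k(1−q^k))) X^k; that is, e_q(X) = Σ_{m≥0} S^m/m! (this sum of powers of S converges coefficientwise since S has zero constant term). -/

import Mathlib

/-- The q-number `(m)_q = (q^m − 1)/(q − 1)` for an integer `m`. -/
noncomputable def qNum (q : ℝ) (m : ℤ) : ℝ := (q ^ m - 1) / (q - 1)

/-- The q-factorial `(k)_q! = (k)_q (k−1)_q ⋯ (1)_q`, with `(0)_q! = 1`. -/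
noncomputable def qFactorial (q : ℝ) (k : ℕ) : ℝ :=
  ∏ i ∈ Finset.range k, qNum q ((i : ℤ) + 1)

/-- The q-exponential as a formal power series: `e_q(X) = Σ_{n≥0} X^n/(n)_q!`. -/
noncomputable def qExp (q : ℝ) : PowerSeries ℝ :=
  PowerSeries.mk fun n => 1 / qFactorial q n

/-- The series `S = Σ_{k≥1} ((1−q)^k/(k(1−q^k))) X^k`. -/
noncomputable def qExpLog (q : ℝ) : PowerSeries ℝ :=
  PowerSeries.mk fun k => if k = 0 then 0 else (1 - q) ^ k / (k * (1 - q ^ k))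

namespace QExpAux

open PowerSeries

/-- Formal exponential of a power series with zero constant term, coefficientwise. -/
noncomputable def expS (F : PowerSeries ℝ) : PowerSeries ℝ :=
  PowerSeries.mk fun n => ∑ m ∈ Finset.range (n + 1),
    PowerSeries.coeff n (F ^ m) / (Nat.factorial m)

/-- Truncated exponential. -/
noncomputable def pexp (N : ℕ) (F : PowerSeries ℝ) : PowerSeries ℝ :=
  ∑ m ∈ Finset.range (N + 1), ((Nat.factorial m : ℝ))⁻¹ • F ^ m

lemma coeff_pow_eq_zero {F : PowerSeries ℝ} (hF : PowerSeries.constantCoeff F = 0)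
    {n m : ℕ} (h : n < m) : PowerSeries.coeff n (F ^ m) = 0 := by
  have hX : (PowerSeries.X : PowerSeries ℝ) ∣ F := PowerSeries.X_dvd_iff.mpr hF
  have h2 : (PowerSeries.X : PowerSeries ℝ) ^ m ∣ F ^ m := pow_dvd_pow_of_dvd hX m
  exact (PowerSeries.X_pow_dvd_iff.mp h2) n h

lemma coeff_pexp (N n : ℕ) (F : PowerSeries ℝ) :
    PowerSeries.coeff n (pexp N F) =
      ∑ m ∈ Finset.range (N + 1), PowerSeries.coeff n (F ^ m) / (Nat.factorial m) := by
  simp [pexp, div_eq_inv_mul, smul_eq_mul]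

lemma coeff_expS_eq_pexp {F : PowerSeries ℝ} (hF : PowerSeries.constantCoeff F = 0)
    {n N : ℕ} (h : n ≤ N) :
    PowerSeries.coeff n (expS F) = PowerSeries.coeff n (pexp N F) := by
  rw [expS, coeff_mk, coeff_pexp]
  apply Finset.sum_subset
  · exact Finset.range_subset_range.mpr (by omega)
  · intro m _ hm
    rw [coeff_pow_eq_zero hF (by simpa using hm), zero_div]

lemma derivative_pexp (N : ℕ) (F : PowerSeries ℝ) :
    d⁄dX ℝ (pexp (N + 1) F) = d⁄dX ℝ F * pexp N F := by
  rw [pexp, pexp, map_sum, Finset.sum_range_succ', Finset.mul_sum]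
  have h0 : d⁄dX ℝ (((Nat.factorial 0 : ℝ))⁻¹ • F ^ 0) = 0 := by simp
  rw [h0, add_zero]
  apply Finset.sum_congr rfl
  intro i _
  rw [Derivation.map_smul, Derivation.leibniz_pow]
  rw [smul_eq_mul, Nat.add_sub_cancel]
  rw [← Nat.cast_smul_eq_nsmul ℝ, smul_smul]
  have : ((Nat.factorial (i+1) : ℝ))⁻¹ * ((i+1 : ℕ) : ℝ) = ((Nat.factorial i : ℝ))⁻¹ := by
    rw [Nat.factorial_succ]
    push_cast
    rw [mul_inv]
    field_simp
  rw [this, mul_comm (d⁄dX ℝ F), smul_mul_assoc]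

lemma derivative_expS {F : PowerSeries ℝ} (hF : PowerSeries.constantCoeff F = 0) :
    d⁄dX ℝ (expS F) = d⁄dX ℝ F * expS F := by
  ext n
  calc PowerSeries.coeff n (d⁄dX ℝ (expS F))
      = PowerSeries.coeff (n+1) (expS F) * (n+1) := PowerSeries.coeff_derivative _ n
    _ = PowerSeries.coeff (n+1) (pexp (n+1) F) * (n+1) := by
        rw [coeff_expS_eq_pexp hF (le_refl (n+1))]
    _ = PowerSeries.coeff n (d⁄dX ℝ (pexp (n+1) F)) := (PowerSeries.coeff_derivative _ n).symm
    _ = PowerSeries.coeff n (d⁄dX ℝ F * pexp n F) := by rw [derivative_pexp]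
    _ = PowerSeries.coeff n (d⁄dX ℝ F * expS F) := by
        rw [PowerSeries.coeff_mul, PowerSeries.coeff_mul]
        apply Finset.sum_congr rfl
        intro p hp
        have hle : p.2 ≤ n := by
          have := Finset.HasAntidiagonal.mem_antidiagonal.mp hp; omega
        rw [coeff_expS_eq_pexp hF hle]

lemma ode_unique (B H₁ H₂ : PowerSeries ℝ) (h1 : d⁄dX ℝ H₁ = B * H₁)
    (h2 : d⁄dX ℝ H₂ = B * H₂)
    (h0 : PowerSeries.coeff 0 H₁ = PowerSeries.coeff 0 H₂) : H₁ = H₂ := by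
  ext n
  induction n using Nat.strong_induction_on with
  | _ n ih =>
    match n with
    | 0 => exact h0
    | (n+1) =>
      have e1 : PowerSeries.coeff (n+1) H₁ * ((n:ℝ)+1) = PowerSeries.coeff n (B * H₁) := by
        rw [← h1, PowerSeries.coeff_derivative]
      have e2 : PowerSeries.coeff (n+1) H₂ * ((n:ℝ)+1) = PowerSeries.coeff n (B * H₂) := by
        rw [← h2, PowerSeries.coeff_derivative]
      have e3 : PowerSeries.coeff n (B * H₁) = PowerSeries.coeff n (B * H₂) := by
        rw [PowerSeries.coeff_mul, PowerSeries.coeff_mul]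
        apply Finset.sum_congr rfl
        intro p hp
        rw [ih p.2 (by have := Finset.HasAntidiagonal.mem_antidiagonal.mp hp; omega)]
      have hne : ((n:ℝ)+1) ≠ 0 := by positivity
      exact mul_right_cancel₀ hne (by rw [e1, e2, e3])

lemma rescale_expS (a : ℝ) (F : PowerSeries ℝ) :
    PowerSeries.rescale a (expS F) = expS (PowerSeries.rescale a F) := by
  ext n
  rw [expS, expS, PowerSeries.coeff_rescale, PowerSeries.coeff_mk, PowerSeries.coeff_mk,
    Finset.mul_sum]
  apply Finset.sum_congr rfl
  intro m _
  rw [← map_pow, PowerSeries.coeff_rescale]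
  ring

end QExpAux

open PowerSeries QExpAux in
theorem qExp_eq_exp_qExpLog (q : ℝ) (hq0 : 0 < q) (hq1 : q < 1) :
    ∀ n : ℕ,
      PowerSeries.coeff n (qExp q) =
        ∑ m ∈ Finset.range (n + 1),
          PowerSeries.coeff n ((qExpLog q) ^ m) / (Nat.factorial m) := by
  -- basic nonvanishing facts
  have hq1' : q - 1 ≠ 0 := by intro h; nlinarith
  have hqk : ∀ k : ℕ, (1 : ℝ) - q ^ (k+1) ≠ 0 := by
    intro k
    have : q ^ (k+1) < 1 := pow_lt_one₀ (le_of_lt hq0) hq1 (Nat.succ_ne_zero k)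
    intro h; nlinarith
  set c : ℝ := 1 - q with hc
  set S : PowerSeries ℝ := qExpLog q with hSdef
  have hS0 : PowerSeries.constantCoeff S = 0 := by
    rw [hSdef, qExpLog, ← PowerSeries.coeff_zero_eq_constantCoeff_apply, PowerSeries.coeff_mk]
    simp
  have hrS0 : PowerSeries.constantCoeff (PowerSeries.rescale q S) = 0 := by
    rw [← PowerSeries.coeff_zero_eq_constantCoeff_apply, PowerSeries.coeff_rescale]
    rw [PowerSeries.coeff_zero_eq_constantCoeff_apply, hS0, mul_zero]
  set E : PowerSeries ℝ := expS S with hEdef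
  set L : PowerSeries ℝ := PowerSeries.rescale q S - S with hLdef
  -- derivative of L
  have hdL : d⁄dX ℝ L = PowerSeries.mk fun j => -(c ^ (j+1)) := by
    ext j
    rw [hLdef, PowerSeries.coeff_derivative, PowerSeries.coeff_mk, map_sub,
      PowerSeries.coeff_rescale, hSdef, qExpLog, PowerSeries.coeff_mk,
      if_neg (Nat.succ_ne_zero j)]
    have hj : ((j:ℝ)+1) ≠ 0 := by positivity
    have h1 := hqk j
    push_cast
    field_simp
    ring
  -- (1 - cX) * L' = C (-c)
  have hkey : (1 - PowerSeries.C c * PowerSeries.X) * d⁄dX ℝ L = PowerSeries.C (-c) := by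
    rw [hdL]
    have h : (1 - PowerSeries.C c * PowerSeries.X) * (PowerSeries.mk fun j => -(c ^ (j+1)))
        = (PowerSeries.mk fun j => -(c ^ (j+1)))
          - PowerSeries.C c * (PowerSeries.X * (PowerSeries.mk fun j => -(c ^ (j+1)))) := by
      ring
    rw [h]
    ext n
    match n with
    | 0 => simp [pow_succ]
    | (n+1) =>
      rw [map_sub, PowerSeries.coeff_mk, PowerSeries.coeff_C_mul,
        PowerSeries.coeff_succ_X_mul, PowerSeries.coeff_mk, PowerSeries.coeff_C]
      simp [pow_succ]
      ring
  have hrSL : PowerSeries.rescale q S = S + L := by rw [hLdef]; ring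
  -- the functional equation
  have hfun : PowerSeries.rescale q E = E * (1 - PowerSeries.C c * PowerSeries.X) := by
    apply ode_unique (d⁄dX ℝ (PowerSeries.rescale q S))
    · rw [hEdef, rescale_expS]
      exact derivative_expS hrS0
    · have hdE : d⁄dX ℝ E = d⁄dX ℝ S * E := derivative_expS hS0
      have hd1 : d⁄dX ℝ (1 - PowerSeries.C c * PowerSeries.X) = - PowerSeries.C c := by
        rw [map_sub]
        simp
      rw [Derivation.leibniz, smul_eq_mul, smul_eq_mul, hd1, hdE, hrSL, map_add]
      simp only [map_neg] at hkey
      linear_combination (-E) * hkey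
    · rw [PowerSeries.coeff_zero_eq_constantCoeff_apply, PowerSeries.coeff_zero_eq_constantCoeff_apply]
      rw [← PowerSeries.coeff_zero_eq_constantCoeff_apply ((PowerSeries.rescale q) E),
        PowerSeries.coeff_rescale, PowerSeries.coeff_zero_eq_constantCoeff_apply]
      simp [map_mul, map_sub]
  -- coefficient recursion for E
  have hErec : ∀ n : ℕ, (1 - q^(n+1)) * PowerSeries.coeff (n+1) E
      = (1 - q) * PowerSeries.coeff n E := by
    intro n
    have h1 := congrArg (PowerSeries.coeff (n+1)) hfun
    rw [PowerSeries.coeff_rescale] at h1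
    have h2 : E * (1 - PowerSeries.C c * PowerSeries.X)
        = E - PowerSeries.C c * (PowerSeries.X * E) := by ring
    rw [h2, map_sub, PowerSeries.coeff_C_mul, PowerSeries.coeff_succ_X_mul] at h1
    rw [hc] at h1
    linear_combination -h1
  have hE0 : PowerSeries.coeff 0 E = 1 := by
    rw [hEdef, expS, PowerSeries.coeff_mk]
    simp
  -- coefficient recursion for qExp
  have hfac : ∀ k : ℕ, qFactorial q k ≠ 0 := by
    intro k
    induction k with
    | zero => simp [qFactorial]
    | succ k ih =>
      rw [qFactorial, Finset.prod_range_succ, ← qFactorial]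
      apply mul_ne_zero ih
      rw [qNum]
      apply div_ne_zero _ hq1'
      have hz : q ^ ((k:ℤ)+1) = q ^ (k+1 : ℕ) := by
        rw [show ((k:ℤ)+1) = ((k+1:ℕ):ℤ) by push_cast; ring, zpow_natCast]
      rw [hz]
      have := hqk k
      intro h
      apply this
      linarith
  have hA0 : PowerSeries.coeff 0 (qExp q) = 1 := by
    rw [qExp, PowerSeries.coeff_mk]
    simp [qFactorial]
  have hArec : ∀ n : ℕ, (1 - q^(n+1)) * PowerSeries.coeff (n+1) (qExp q)
      = (1 - q) * PowerSeries.coeff n (qExp q) := by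
    intro n
    have hQ : qFactorial q (n+1) = qFactorial q n * ((q^(n+1) - 1)/(q-1)) := by
      rw [qFactorial, Finset.prod_range_succ, ← qFactorial, qNum]
      rw [show ((n:ℤ)+1) = ((n+1:ℕ):ℤ) by push_cast; ring, zpow_natCast]
    rw [qExp, PowerSeries.coeff_mk, PowerSeries.coeff_mk, hQ]
    have h1 := hfac n
    have h2 := hqk n
    have h3 : q^(n+1) - 1 ≠ 0 := fun h => h2 (by linarith)
    field_simp
    ring
  -- conclude
  have key : ∀ n : ℕ, PowerSeries.coeff n (qExp q) = PowerSeries.coeff n E := by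
    intro n
    induction n with
    | zero => rw [hA0, hE0]
    | succ n ih =>
      apply mul_left_cancel₀ (hqk n)
      rw [hArec n, hErec n, ih]
  intro n
  rw [key n, hEdef, expS, PowerSeries.coeff_mk]
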